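/- Every maxterm of the string-matching function SM_{n,k} has width at least 2·√(n-k+1). That is, if ρ is a partial assignment fixing n₁ text variables and k₁ pattern variables that forces SM(x,y) = 0 regardless of the unfixed variables, then n₁ + k₁ ≥ 2·√(n-k+1). -/
import Mathlib


/-- `y` occurs as a contiguous substring of `x`. -/
def occursIn {n k : ℕ} (x : Fin n → Bool) (y : Fin k → Bool) : Prop :=
  ∃ i, ∃ _ : i + k ≤ n, ∀ t : Fin k, x ⟨i + t.val, by have := t.isLt; omega⟩ = y t

/-- Every maxterm of `SM_{n,k}` has width at least `2·√(n-k+1)`: if a partial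
assignment (`ρx` on text variables, `ρy` on pattern variables) forces
`SM(x,y) = 0` on every consistent total input, then the number of fixed
variables is at least `2·√(n-k+1)`. -/
theorem maxterm_width (n k : ℕ) (hk : 1 ≤ k) (hkn : k ≤ n)
    (ρx : Fin n → Option Bool) (ρy : Fin k → Option Bool)
    (hforce : ∀ (x : Fin n → Bool) (y : Fin k → Bool),
      (∀ i b, ρx i = some b → x i = b) →
      (∀ j b, ρy j = some b → y j = b) →
      ¬ occursIn x y) :
    2 * Real.sqrt ((n : ℝ) - k + 1) ≤
      (((Finset.univ.filter fun i => (ρx i).isSome = true).card : ℝ) +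
        ((Finset.univ.filter fun j => (ρy j).isSome = true).card : ℝ)) := by
  classical
  set A := Finset.univ.filter fun i => (ρx i).isSome = true with hA
  set B := Finset.univ.filter fun j => (ρy j).isSome = true with hB
  -- Key combinatorial fact: for every shift there is a doubly-fixed position
  have key : ∀ i : ℕ, i + k ≤ n → ∃ j : Fin k, (ρy j).isSome ∧
      ∃ h : i + j.val < n, (ρx ⟨i + j.val, h⟩).isSome := by
    intro i hi
    by_contra hcon
    push_neg at hcon
    set y : Fin k → Bool := fun j =>
      (ρy j).getD ((ρx ⟨i + j.val, by have := j.isLt; omega⟩).getD false) with hy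
    set x : Fin n → Bool := fun t =>
      (ρx t).getD (if h : i ≤ t.val ∧ t.val < i + k then
        y ⟨t.val - i, by omega⟩ else false) with hx
    apply hforce x y ?_ ?_ ⟨i, hi, ?_⟩
    · intro t b htb
      simp [hx, htb]
    · intro j b hjb
      simp [hy, hjb]
    · intro t
      have hlt : i + t.val < n := by have := t.isLt; omega
      rcases hopt : ρx ⟨i + t.val, hlt⟩ with _ | b
      · have hcond : i ≤ i + t.val ∧ i + t.val < i + k := by
          constructor <;> omega
        have : (⟨i + t.val - i, by omega⟩ : Fin k) = t := by
          apply Fin.ext; simp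
        simp [hx, hopt, hcond, this]
      · -- ρx fixed at i+t, so ρy t must be none
        have hySome : ¬ (ρy t).isSome := by
          intro hs
          exact (hcon t hs hlt) (by simp [hopt])
        have hyt : ρy t = none := Option.not_isSome_iff_eq_none.mp hySome
        simp [hx, hopt, hy, hyt]
  -- Counting: n - k + 1 ≤ |A| * |B|
  have key' : ∀ i : Fin (n - k + 1), ∃ p : Fin n × Fin k,
      p ∈ A ×ˢ B ∧ p.1.val = i.val + p.2.val := by
    intro i
    obtain ⟨j, hj, h, hxj⟩ := key i.val (by have := i.isLt; omega)
    exact ⟨(⟨i.val + j.val, h⟩, j), by simp [hA, hB, hj, hxj], rfl⟩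
  choose f hf1 hf2 using key'
  have hcard : n - k + 1 ≤ A.card * B.card := by
    have hinj : Set.InjOn f ↑(Finset.univ : Finset (Fin (n - k + 1))) := by
      intro a _ b _ hab
      have h1 := hf2 a
      have h2 := hf2 b
      rw [hab] at h1
      apply Fin.ext
      omega
    have := Finset.card_le_card_of_injOn f (fun i _ => hf1 i) hinj
    simpa [Finset.card_product] using this
  -- Real arithmetic
  have hcast : (n : ℝ) - k + 1 = ((n - k + 1 : ℕ) : ℝ) := by
    push_cast [Nat.cast_sub hkn]
    ring
  have ha : (0 : ℝ) ≤ (A.card : ℝ) := by positivity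
  have hb : (0 : ℝ) ≤ (B.card : ℝ) := by positivity
  have h1 : (n : ℝ) - k + 1 ≤ (A.card : ℝ) * B.card := by
    rw [hcast]
    exact_mod_cast hcard
  have h2 : Real.sqrt ((n : ℝ) - k + 1) ≤ Real.sqrt ((A.card : ℝ) * B.card) :=
    Real.sqrt_le_sqrt h1
  have h3 : Real.sqrt ((A.card : ℝ) * B.card) = Real.sqrt A.card * Real.sqrt B.card :=
    Real.sqrt_mul ha _
  nlinarith [sq_nonneg (Real.sqrt A.card - Real.sqrt B.card),
    Real.sq_sqrt ha, Real.sq_sqrt hb]
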